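/- The abelianization of GL₂(ℤ̂) is isomorphic to {±1} × ℤ̂^×, with the abelianization map identified with (sgn, det) : GL₂(ℤ̂) → {±1} × ℤ̂^×; in particular (sgn, det) is surjective and its kernel is the closed commutator subgroup of GL₂(ℤ̂). -/

import Mathlib

open Matrix

instance (p : Nat.Primes) : Fact (Nat.Prime p.val) := ⟨p.2⟩

/-- `GL₂(ℤ̂)`, presented via `ℤ̂ ≅ ∏_ℓ ℤ_ℓ` as the product of the groups `GL₂(ℤ_ℓ)`. -/
abbrev GL2Zhat : Type := ∀ p : Nat.Primes, GL (Fin 2) ℤ_[p.val]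

/-- `ℤ̂ˣ`, presented as `∏_ℓ ℤ_ℓˣ`. -/
abbrev ZhatUnits : Type := ∀ p : Nat.Primes, ℤ_[p.val]ˣ

/-- The permutation of vectors induced by an invertible matrix. -/
def glToPerm {R : Type*} [CommRing R] (g : GL (Fin 2) R) : Equiv.Perm (Fin 2 → R) where
  toFun v := g.val.mulVec v
  invFun v := (g⁻¹).val.mulVec v
  left_inv v := by
    show (g⁻¹).val.mulVec (g.val.mulVec v) = v
    rw [Matrix.mulVec_mulVec, ← Units.val_mul, inv_mul_cancel, Units.val_one, Matrix.one_mulVec]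
  right_inv v := by
    show g.val.mulVec ((g⁻¹).val.mulVec v) = v
    rw [Matrix.mulVec_mulVec, ← Units.val_mul, mul_inv_cancel, Units.val_one, Matrix.one_mulVec]

def glPermHom (R : Type*) [CommRing R] : GL (Fin 2) R →* Equiv.Perm (Fin 2 → R) where
  toFun := glToPerm
  map_one' := by ext v; simp [glToPerm]
  map_mul' g h := by
    ext v : 1
    show (g * h).val.mulVec v = g.val.mulVec (h.val.mulVec v)
    rw [Matrix.mulVec_mulVec, Units.val_mul]

/-- The sign character on `GL₂(𝔽₂) ≅ S₃`, via the permutation action on `𝔽₂²`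
(the zero vector being a fixed point). -/
noncomputable def sgnF2 : GL (Fin 2) (ZMod 2) →* ℤˣ :=
  Equiv.Perm.sign.comp (glPermHom (ZMod 2))

/-- The projection `GL₂(ℤ̂) → GL₂(ℤ_ℓ)`. -/
noncomputable def projGL (p : Nat.Primes) : GL2Zhat →* GL (Fin 2) ℤ_[p.val] :=
  Pi.evalMonoidHom (fun p : Nat.Primes => GL (Fin 2) ℤ_[p.val]) p

/-- The sign map on `GL₂(ℤ̂)`: projection to `GL₂(ℤ₂)`, reduction mod 2, then the
sign character on `GL₂(𝔽₂) ≅ S₃`. -/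
noncomputable def sgnHat : GL2Zhat →* ℤˣ :=
  (sgnF2.comp (Matrix.GeneralLinearGroup.map (PadicInt.toZMod (p := 2)))).comp
    (projGL ⟨2, Nat.prime_two⟩)

/-- The determinant map `GL₂(ℤ̂) → ℤ̂ˣ`. -/
noncomputable def detHat : GL2Zhat →* ZhatUnits where
  toFun g := fun p => Matrix.GeneralLinearGroup.det (g p)
  map_one' := by ext p; simp
  map_mul' g h := by ext p; simp

namespace AblGL2

open scoped commutatorElement

variable {R : Type*} [CommRing R]

def E12 (t : R) : GL (Fin 2) R :=
  ⟨!![1,t;0,1], !![1,-t;0,1],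
    by ext i j; fin_cases i <;> fin_cases j <;> simp [Matrix.mul_fin_two],
    by ext i j; fin_cases i <;> fin_cases j <;> simp [Matrix.mul_fin_two]⟩

def E21 (t : R) : GL (Fin 2) R :=
  ⟨!![1,0;t,1], !![1,0;-t,1],
    by ext i j; fin_cases i <;> fin_cases j <;> simp [Matrix.mul_fin_two],
    by ext i j; fin_cases i <;> fin_cases j <;> simp [Matrix.mul_fin_two]⟩

def D1 (u : Rˣ) : GL (Fin 2) R :=
  ⟨!![(u:R),0;0,1], !![((u⁻¹:Rˣ):R),0;0,1],
    by ext i j; fin_cases i <;> fin_cases j <;> simp [Matrix.mul_fin_two],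
    by ext i j; fin_cases i <;> fin_cases j <;> simp [Matrix.mul_fin_two]⟩

def D2 (u : Rˣ) : GL (Fin 2) R :=
  ⟨!![1,0;0,(u:R)], !![1,0;0,((u⁻¹:Rˣ):R)],
    by ext i j; fin_cases i <;> fin_cases j <;> simp [Matrix.mul_fin_two],
    by ext i j; fin_cases i <;> fin_cases j <;> simp [Matrix.mul_fin_two]⟩

def DD (u : Rˣ) : GL (Fin 2) R :=
  ⟨!![(u:R),0;0,((u⁻¹:Rˣ):R)], !![((u⁻¹:Rˣ):R),0;0,(u:R)],
    by ext i j; fin_cases i <;> fin_cases j <;> simp [Matrix.mul_fin_two],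
    by ext i j; fin_cases i <;> fin_cases j <;> simp [Matrix.mul_fin_two]⟩

def Wm : GL (Fin 2) R :=
  ⟨!![0,1;-1,0], !![0,-1;1,0],
    by ext i j; fin_cases i <;> fin_cases j <;> simp [Matrix.mul_fin_two],
    by ext i j; fin_cases i <;> fin_cases j <;> simp [Matrix.mul_fin_two]⟩

lemma comm_E12 (u : Rˣ) (t : R) : ⁅D1 u, E12 t⁆ = E12 ((u - 1) * t) := by
  ext i j : 2
  fin_cases i <;> fin_cases j <;>
    simp [commutatorElement_def, D1, E12, Units.inv_mk, Matrix.mul_fin_two, Units.val_mul] <;>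
    ring

lemma comm_E21 (u : Rˣ) (t : R) : ⁅D2 u, E21 t⁆ = E21 ((u - 1) * t) := by
  ext i j : 2
  fin_cases i <;> fin_cases j <;>
    simp [commutatorElement_def, D2, E21, Units.inv_mk, Matrix.mul_fin_two, Units.val_mul] <;>
    ring

lemma comm_DD (u : Rˣ) : ⁅D1 u, Wm⁆ = DD u := by
  ext i j : 2
  fin_cases i <;> fin_cases j <;>
    simp [commutatorElement_def, D1, Wm, DD, Units.inv_mk, Matrix.mul_fin_two, Units.val_mul]

lemma E12_inv (t : R) : (E12 t)⁻¹ = E12 (-t) := by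
  ext i j : 2
  fin_cases i <;> fin_cases j <;> simp [E12, Units.inv_mk]

lemma DD_one : DD (1 : Rˣ) = 1 := by
  ext i j : 2
  fin_cases i <;> fin_cases j <;> simp [DD]

lemma det_E12 (t : R) : (E12 t).val.det = 1 := by
  simp [E12, Matrix.det_fin_two]

lemma decomp (g : GL (Fin 2) R) (a : Rˣ) (hA : g.val 0 0 = a) (hdet : g.val.det = 1) :
    g = E21 (g.val 1 0 * ((a⁻¹ : Rˣ) : R)) * DD a * E12 (((a⁻¹ : Rˣ) : R) * g.val 0 1) := by
  have hd : g.val 0 0 * g.val 1 1 - g.val 0 1 * g.val 1 0 = 1 := by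
    rw [← Matrix.det_fin_two]; exact hdet
  have hia : ((a⁻¹ : Rˣ) : R) * (a : R) = 1 := Units.inv_mul a
  ext i j : 2
  fin_cases i <;> fin_cases j <;>
    simp [E21, DD, E12, Matrix.mul_fin_two, Units.val_mul, hA]
  linear_combination ((a⁻¹:Rˣ):R) * hd - g.val 1 1 * hia - ((a⁻¹:Rˣ):R) * g.val 1 1 * hA

/-- If the top-left entry is a unit, `g` is a product of three specific commutators. -/
lemma decomp_comm (g : GL (Fin 2) R) (a : Rˣ) (hA : g.val 0 0 = a) (hdet : g.val.det = 1)
    (h12 : ∀ t : R, ∃ x y : GL (Fin 2) R, E12 t = ⁅x, y⁆)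
    (h21 : ∀ t : R, ∃ x y : GL (Fin 2) R, E21 t = ⁅x, y⁆) :
    ∃ x y : Fin 3 → GL (Fin 2) R, g = ⁅x 0, y 0⁆ * ⁅x 1, y 1⁆ * ⁅x 2, y 2⁆ := by
  obtain ⟨x1, y1, e1⟩ := h21 (g.val 1 0 * ((a⁻¹ : Rˣ) : R))
  obtain ⟨x3, y3, e3⟩ := h12 (((a⁻¹ : Rˣ) : R) * g.val 0 1)
  exact ⟨![x1, D1 a, x3], ![y1, Wm, y3], by
    simpa [← e1, ← e3, comm_DD] using decomp g a hA hdet⟩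

section Padic
variable {p : ℕ} [hp : Fact p.Prime]

lemma isUnit_intCast {k : ℤ} (hk : ¬ ((p : ℤ) ∣ k)) : IsUnit ((k : ℤ) : ℤ_[p]) := by
  rw [PadicInt.isUnit_iff]
  refine ((PadicInt.norm_le_one _).lt_or_eq.resolve_left ?_)
  rw [PadicInt.norm_int_lt_one_iff_dvd]
  exact hk

lemma isUnit_two (hp2 : p ≠ 2) : IsUnit (2 : ℤ_[p]) := by
  have := isUnit_intCast (p := p) (k := 2) (by
    intro h
    rw [show ((2:ℤ)) = ((2:ℕ):ℤ) by norm_num, Int.natCast_dvd_natCast,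
      Nat.prime_dvd_prime_iff_eq hp.1 Nat.prime_two] at h
    exact hp2 h)
  simpa using this

lemma isUnit_three : IsUnit (3 : ℤ_[2]) := by
  have := isUnit_intCast (p := 2) (k := 3) (by norm_num)
  simpa using this

/-- At an odd prime, every elementary matrix is a commutator. -/
lemma elem12_comm (hp2 : p ≠ 2) (t : ℤ_[p]) :
    ∃ x y : GL (Fin 2) ℤ_[p], E12 t = ⁅x, y⁆ := by
  refine ⟨D1 (isUnit_two hp2).unit, E12 t, ?_⟩
  rw [comm_E12]
  congr 1
  rw [IsUnit.unit_spec]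
  ring

lemma elem21_comm (hp2 : p ≠ 2) (t : ℤ_[p]) :
    ∃ x y : GL (Fin 2) ℤ_[p], E21 t = ⁅x, y⁆ := by
  refine ⟨D2 (isUnit_two hp2).unit, E21 t, ?_⟩
  rw [comm_E21]
  congr 1
  rw [IsUnit.unit_spec]
  ring

/-- At `p = 2`, elementary matrices with entry divisible by 2 are commutators. -/
lemma elem12_comm_two (t : ℤ_[2]) :
    ∃ x y : GL (Fin 2) ℤ_[2], E12 (2 * t) = ⁅x, y⁆ := by
  refine ⟨D1 isUnit_three.unit, E12 t, ?_⟩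
  rw [comm_E12]
  congr 1
  rw [IsUnit.unit_spec]
  ring

lemma elem21_comm_two (t : ℤ_[2]) :
    ∃ x y : GL (Fin 2) ℤ_[2], E21 (2 * t) = ⁅x, y⁆ := by
  refine ⟨D2 isUnit_three.unit, E21 t, ?_⟩
  rw [comm_E21]
  congr 1
  rw [IsUnit.unit_spec]
  ring

/-- Decomposition of a determinant-one matrix at an odd prime. -/
lemma odd_decomp (hp2 : p ≠ 2) (g : GL (Fin 2) ℤ_[p]) (hdet : g.val.det = 1) :
    ∃ x y : Fin 4 → GL (Fin 2) ℤ_[p],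
      g = ⁅x 0, y 0⁆ * ⁅x 1, y 1⁆ * ⁅x 2, y 2⁆ * ⁅x 3, y 3⁆ := by
  have hd : g.val 0 0 * g.val 1 1 - g.val 0 1 * g.val 1 0 = 1 := by
    rw [← Matrix.det_fin_two]; exact hdet
  by_cases ha : IsUnit (g.val 0 0)
  · obtain ⟨x, y, h⟩ := decomp_comm g ha.unit ha.unit_spec.symm hdet
      (elem12_comm hp2) (elem21_comm hp2)
    exact ⟨![x 0, x 1, x 2, 1], ![y 0, y 1, y 2, 1], by simpa using h⟩
  · -- the bottom-left entry is a unit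
    have hc : IsUnit (g.val 1 0) := by
      have h1 : IsUnit (g.val 0 0 * g.val 1 1 + -(g.val 0 1 * g.val 1 0)) := by
        rw [← sub_eq_add_neg, hd]; exact isUnit_one
      rcases IsLocalRing.isUnit_or_isUnit_of_isUnit_add h1 with h | h
      · exact absurd (isUnit_of_mul_isUnit_left h) ha
      · exact isUnit_of_mul_isUnit_right (IsUnit.neg_iff _ |>.mp h)
    set t : ℤ_[p] := (1 - g.val 0 0) * ((hc.unit⁻¹ : _ˣ) : ℤ_[p]) with ht
    set g' := E12 t * g with hg'
    have hA' : g'.val 0 0 = ((1 : ℤ_[p]ˣ) : ℤ_[p]) := by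
      have : g'.val 0 0 = g.val 0 0 + t * g.val 1 0 := by
        simp [hg', Units.val_mul, E12, Matrix.mul_apply, Fin.sum_univ_two]
      rw [this, ht]
      have hiu : ((hc.unit⁻¹ : _ˣ) : ℤ_[p]) * g.val 1 0 = 1 := by
        have h2 := Units.inv_mul hc.unit
        rwa [hc.unit_spec] at h2
      push_cast
      linear_combination (1 - g.val 0 0) * hiu
    have hdet' : g'.val.det = 1 := by
      rw [hg', Units.val_mul, Matrix.det_mul, det_E12, one_mul, hdet]
    obtain ⟨x, y, h⟩ := decomp_comm g' 1 hA' hdet' (elem12_comm hp2) (elem21_comm hp2)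
    obtain ⟨x0, y0, e0⟩ := elem12_comm hp2 (-t)
    refine ⟨![x0, x 0, x 1, x 2], ![y0, y 0, y 1, y 2], ?_⟩
    have hgg : g = E12 (-t) * g' := by rw [hg', ← E12_inv, ← mul_assoc, inv_mul_cancel, one_mul]
    show g = ⁅x0, y0⁆ * ⁅x 0, y 0⁆ * ⁅x 1, y 1⁆ * ⁅x 2, y 2⁆
    rw [hgg, h, ← e0]
    group

end Padic

-- p = 2 specific material
def Pm : GL (Fin 2) R :=
  ⟨!![0,1;1,0], !![0,1;1,0],
    by ext i j; fin_cases i <;> fin_cases j <;> simp [Matrix.mul_fin_two],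
    by ext i j; fin_cases i <;> fin_cases j <;> simp [Matrix.mul_fin_two]⟩

def Qm : GL (Fin 2) R :=
  ⟨!![1,1;0,-1], !![1,1;0,-1],
    by ext i j; fin_cases i <;> fin_cases j <;> simp [Matrix.mul_fin_two],
    by ext i j; fin_cases i <;> fin_cases j <;> simp [Matrix.mul_fin_two]⟩

def Cm : GL (Fin 2) R :=
  ⟨!![-1,-1;1,0], !![0,1;-1,-1],
    by ext i j; fin_cases i <;> fin_cases j <;> simp [Matrix.mul_fin_two],
    by ext i j; fin_cases i <;> fin_cases j <;> simp [Matrix.mul_fin_two]⟩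

lemma Cm_comm : (Cm : GL (Fin 2) R) = ⁅(Pm : GL (Fin 2) R), Qm⁆ := by
  ext i j : 2
  fin_cases i <;> fin_cases j <;>
    simp [commutatorElement_def, Cm, Pm, Qm, Units.inv_mk, Matrix.mul_fin_two, Units.val_mul]

lemma Cm_sq : (Cm * Cm : GL (Fin 2) R) = ⁅(Qm : GL (Fin 2) R), Pm⁆ := by
  ext i j : 2
  fin_cases i <;> fin_cases j <;>
    simp [commutatorElement_def, Cm, Pm, Qm, Units.inv_mk, Matrix.mul_fin_two, Units.val_mul]

lemma det_Cm : (Cm : GL (Fin 2) R).val.det = 1 := by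
  simp [Cm, Matrix.det_fin_two]

/-- Reduction mod 2 of `GL₂(ℤ₂)`. -/
noncomputable abbrev red : GL (Fin 2) ℤ_[2] →* GL (Fin 2) (ZMod 2) :=
  Matrix.GeneralLinearGroup.map (PadicInt.toZMod (p := 2))

def cbar : GL (Fin 2) (ZMod 2) :=
  ⟨!![1,1;1,0], !![0,1;1,1], by decide, by decide⟩

lemma sgn_classify : ∀ u : GL (Fin 2) (ZMod 2), sgnF2 u = 1 →
    u = 1 ∨ u = cbar ∨ u = cbar * cbar := by decide

lemma red_Cm : red Cm = cbar := by
  ext i j : 2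
  show Cm.val.map (PadicInt.toZMod (p := 2)) i j = cbar.val i j
  fin_cases i <;> fin_cases j <;> simp [Cm, cbar] <;> decide

lemma toZMod_eq_zero {x : ℤ_[2]} (hx : PadicInt.toZMod x = 0) : ∃ y, x = 2 * y := by
  have hmem : x ∈ Ideal.span {(2 : ℤ_[2])} := by
    have h2 : ((2 : ℕ) : ℤ_[2]) = (2 : ℤ_[2]) := by norm_num
    rw [← h2, ← PadicInt.maximalIdeal_eq_span_p, ← PadicInt.ker_toZMod, RingHom.mem_ker]
    exact hx
  rw [Ideal.mem_span_singleton] at hmem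
  obtain ⟨y, hy⟩ := hmem
  exact ⟨y, hy⟩

lemma isUnit_of_toZMod_ne_zero {x : ℤ_[2]} (hx : PadicInt.toZMod x ≠ 0) : IsUnit x := by
  by_contra hu
  apply hx
  have hmem : x ∈ IsLocalRing.maximalIdeal ℤ_[2] := hu
  rw [← PadicInt.ker_toZMod, RingHom.mem_ker] at hmem
  exact hmem

lemma red_one_decomp (h : GL (Fin 2) ℤ_[2]) (hdet : h.val.det = 1) (hred : red h = 1) :
    ∃ x y : Fin 3 → GL (Fin 2) ℤ_[2], h = ⁅x 0, y 0⁆ * ⁅x 1, y 1⁆ * ⁅x 2, y 2⁆ := by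
  have hent : ∀ i j, PadicInt.toZMod (h.val i j) = (1 : Matrix (Fin 2) (Fin 2) (ZMod 2)) i j := by
    intro i j
    have := congrArg (fun u : GL (Fin 2) (ZMod 2) => u.val i j) hred
    simpa using this
  have ha : IsUnit (h.val 0 0) := by
    apply isUnit_of_toZMod_ne_zero
    rw [hent 0 0]
    decide
  obtain ⟨sb, hsb⟩ := toZMod_eq_zero (by rw [hent 0 1]; decide)
  obtain ⟨sc, hsc⟩ := toZMod_eq_zero (by rw [hent 1 0]; decide)
  obtain ⟨x1, y1, e1⟩ := elem21_comm_two (sc * ((ha.unit⁻¹ : _ˣ) : ℤ_[2]))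
  obtain ⟨x3, y3, e3⟩ := elem12_comm_two (((ha.unit⁻¹ : _ˣ) : ℤ_[2]) * sb)
  refine ⟨![x1, D1 ha.unit, x3], ![y1, Wm, y3], ?_⟩
  show h = ⁅x1, y1⁆ * ⁅D1 ha.unit, Wm⁆ * ⁅x3, y3⁆
  rw [comm_DD, ← e1, ← e3]
  have hdec := decomp h ha.unit ha.unit_spec.symm hdet
  rw [show h.val 1 0 * ((ha.unit⁻¹ : _ˣ) : ℤ_[2]) = 2 * (sc * ((ha.unit⁻¹ : _ˣ) : ℤ_[2])) from by
      rw [hsc]; ring,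
    show ((ha.unit⁻¹ : _ˣ) : ℤ_[2]) * h.val 0 1 = 2 * (((ha.unit⁻¹ : _ˣ) : ℤ_[2]) * sb) from by
      rw [hsb]; ring] at hdec
  exact hdec

lemma two_decomp (g : GL (Fin 2) ℤ_[2]) (hdet : g.val.det = 1) (hsgn : sgnF2 (red g) = 1) :
    ∃ x y : Fin 4 → GL (Fin 2) ℤ_[2],
      g = ⁅x 0, y 0⁆ * ⁅x 1, y 1⁆ * ⁅x 2, y 2⁆ * ⁅x 3, y 3⁆ := by
  rcases sgn_classify (red g) hsgn with h1 | h1 | h1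
  · obtain ⟨x, y, h⟩ := red_one_decomp g hdet h1
    refine ⟨![1, x 0, x 1, x 2], ![1, y 0, y 1, y 2], ?_⟩
    show g = ⁅(1 : GL (Fin 2) ℤ_[2]), 1⁆ * ⁅x 0, y 0⁆ * ⁅x 1, y 1⁆ * ⁅x 2, y 2⁆
    rw [h]; group
  · have hred : red (Cm⁻¹ * g) = 1 := by
      rw [_root_.map_mul, _root_.map_inv, red_Cm, h1, inv_mul_cancel]
    have hdet' : (Cm⁻¹ * g).val.det = 1 := by
      have : (Cm⁻¹ : GL (Fin 2) ℤ_[2]).val.det = 1 := by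
        simp [Cm, Units.inv_mk, Matrix.det_fin_two]
      rw [Units.val_mul, Matrix.det_mul, this, one_mul, hdet]
    obtain ⟨x, y, h⟩ := red_one_decomp _ hdet' hred
    refine ⟨![Pm, x 0, x 1, x 2], ![Qm, y 0, y 1, y 2], ?_⟩
    show g = ⁅Pm, Qm⁆ * ⁅x 0, y 0⁆ * ⁅x 1, y 1⁆ * ⁅x 2, y 2⁆
    have hg : g = Cm * (⁅x 0, y 0⁆ * ⁅x 1, y 1⁆ * ⁅x 2, y 2⁆) := by rw [← h]; group
    rw [hg, Cm_comm]; group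
  · have hred : red ((Cm * Cm)⁻¹ * g) = 1 := by
      rw [_root_.map_mul, _root_.map_inv, _root_.map_mul, red_Cm, h1, inv_mul_cancel]
    have hdet' : ((Cm * Cm)⁻¹ * g).val.det = 1 := by
      have hC : Matrix.GeneralLinearGroup.det (Cm : GL (Fin 2) ℤ_[2]) = 1 :=
        Units.ext (by rw [Matrix.GeneralLinearGroup.val_det_apply]; exact det_Cm)
      have h2 : Matrix.GeneralLinearGroup.det ((Cm * Cm)⁻¹ : GL (Fin 2) ℤ_[2]) = 1 := by
        rw [_root_.map_inv, _root_.map_mul, hC, one_mul, inv_one]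
      have h2' : ((Cm * Cm)⁻¹ : GL (Fin 2) ℤ_[2]).val.det = 1 := by
        have := congrArg Units.val h2
        rwa [Matrix.GeneralLinearGroup.val_det_apply] at this
      rw [Units.val_mul, Matrix.det_mul, h2', one_mul, hdet]
    obtain ⟨x, y, h⟩ := red_one_decomp _ hdet' hred
    refine ⟨![Qm, x 0, x 1, x 2], ![Pm, y 0, y 1, y 2], ?_⟩
    show g = ⁅Qm, Pm⁆ * ⁅x 0, y 0⁆ * ⁅x 1, y 1⁆ * ⁅x 2, y 2⁆
    have hg : g = (Cm * Cm) * (⁅x 0, y 0⁆ * ⁅x 1, y 1⁆ * ⁅x 2, y 2⁆) := by rw [← h]; group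
    rw [hg, Cm_sq]; group

end AblGL2


namespace AblGL2

open scoped commutatorElement

/-- Any unit of `ℤ₂` reduces to `1` mod `2`. -/
lemma toZMod_unit (v : ℤ_[2]ˣ) : PadicInt.toZMod ((v : ℤ_[2])) = 1 := by
  have h : IsUnit (PadicInt.toZMod ((v : ℤ_[2]))) := (v.isUnit).map (PadicInt.toZMod (p := 2))
  revert h
  generalize PadicInt.toZMod ((v : ℤ_[2])) = x
  revert x
  decide

def e12bar : GL (Fin 2) (ZMod 2) := ⟨!![1,1;0,1], !![1,1;0,1], by decide, by decide⟩

lemma red_E12_one : red (E12 (1 : ℤ_[2])) = e12bar := by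
  ext i j : 2
  show (E12 (1:ℤ_[2])).val.map (PadicInt.toZMod (p := 2)) i j = e12bar.val i j
  fin_cases i <;> fin_cases j <;> simp [E12, e12bar] <;> decide

lemma sgn_e12bar : sgnF2 e12bar = -1 := by decide

abbrev p2 : Nat.Primes := ⟨2, Nat.prime_two⟩

lemma sgnHat_eq (g : GL2Zhat) : sgnHat g = sgnF2 (red (g p2)) := rfl

set_option synthInstance.maxHeartbeats 1000000 in
lemma surjective_prod : Function.Surjective ⇑(sgnHat.prod detHat) := by
  rintro ⟨ε, u⟩
  set D : GL2Zhat := fun p => D1 (u p) with hD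
  have hdetD : detHat D = u := by
    funext p
    apply Units.ext
    rw [show detHat D p = Matrix.GeneralLinearGroup.det (D1 (u p)) from rfl]
    rw [Matrix.GeneralLinearGroup.val_det_apply]
    simp [D1, Matrix.det_fin_two]
  have hredD : red (D p2) = 1 := by
    ext i j : 2
    show (D1 (u p2)).val.map (PadicInt.toZMod (p := 2)) i j = (1 : GL (Fin 2) (ZMod 2)).val i j
    fin_cases i <;> fin_cases j <;> simp [D1, toZMod_unit]
  have hsD : sgnHat D = 1 := by rw [sgnHat_eq, hredD, _root_.map_one]
  rcases Int.units_eq_one_or ε with rfl | rfl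
  · exact ⟨D, by simp [MonoidHom.prod_apply, hsD, hdetD]⟩
  · set T : GL2Zhat := Function.update (1 : GL2Zhat) p2 (E12 (1 : ℤ_[2])) with hT
    have hT2 : T p2 = E12 (1 : ℤ_[2]) := Function.update_self _ _ _
    have hTdet : detHat T = 1 := by
      funext p
      apply Units.ext
      rw [show detHat T p = Matrix.GeneralLinearGroup.det (T p) from rfl,
        Matrix.GeneralLinearGroup.val_det_apply]
      by_cases hp : p = p2
      · subst hp
        rw [hT2]
        simpa using det_E12 (1 : ℤ_[2])
      · rw [show T p = 1 from Function.update_of_ne hp _ _]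
        simp
    have hTs : sgnHat T = -1 := by
      rw [sgnHat_eq, hT2, red_E12_one, sgn_e12bar]
    refine ⟨D * T, ?_⟩
    rw [MonoidHom.prod_apply, _root_.map_mul, _root_.map_mul, hsD, hdetD, hTs, hTdet,
      one_mul, mul_one]

lemma ker_le_commutator : (sgnHat.prod detHat).ker ≤ commutator GL2Zhat := by
  intro g hg
  rw [MonoidHom.mem_ker] at hg
  have h1 : sgnHat g = 1 := congrArg Prod.fst hg
  have h2 : detHat g = 1 := congrArg Prod.snd hg
  have hdet : ∀ p : Nat.Primes, (g p).val.det = 1 := by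
    intro p
    have h3 := congrArg Units.val (congrFun h2 p)
    rw [show (detHat g p).val = (Matrix.GeneralLinearGroup.det (g p)).val from rfl,
      Matrix.GeneralLinearGroup.val_det_apply] at h3
    simpa using h3
  have H : ∀ p : Nat.Primes, ∃ x y : Fin 4 → GL (Fin 2) ℤ_[p.val],
      g p = ⁅x 0, y 0⁆ * ⁅x 1, y 1⁆ * ⁅x 2, y 2⁆ * ⁅x 3, y 3⁆ := by
    intro p
    by_cases hp : p = p2
    · subst hp
      exact two_decomp (g p2) (hdet p2) (by rw [← sgnHat_eq]; exact h1)
    · exact odd_decomp (fun hval => hp (Subtype.ext hval)) (g p) (hdet p)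
  choose x y hxy using H
  have hg4 : g = ⁅fun p => x p 0, fun p => y p 0⁆ * ⁅fun p => x p 1, fun p => y p 1⁆ *
      ⁅fun p => x p 2, fun p => y p 2⁆ * ⁅fun p => x p 3, fun p => y p 3⁆ :=
    funext fun p => hxy p
  rw [hg4, commutator_def]
  exact mul_mem (mul_mem (mul_mem
    (Subgroup.commutator_mem_commutator (Subgroup.mem_top _) (Subgroup.mem_top _))
    (Subgroup.commutator_mem_commutator (Subgroup.mem_top _) (Subgroup.mem_top _)))
    (Subgroup.commutator_mem_commutator (Subgroup.mem_top _) (Subgroup.mem_top _)))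
    (Subgroup.commutator_mem_commutator (Subgroup.mem_top _) (Subgroup.mem_top _))

lemma continuous_toZMod2 : Continuous (PadicInt.toZMod (p := 2)) := by
  rw [continuous_discrete_rng]
  intro y
  rw [Metric.isOpen_iff]
  intro x hx
  refine ⟨1, one_pos, fun z hz => ?_⟩
  simp only [Set.mem_preimage, Set.mem_singleton_iff] at hx ⊢
  have hmem : z - x ∈ IsLocalRing.maximalIdeal ℤ_[2] := by
    rw [IsLocalRing.mem_maximalIdeal, mem_nonunits_iff, PadicInt.not_isUnit_iff]
    rw [Metric.mem_ball, dist_eq_norm] at hz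
    exact hz
  rw [← PadicInt.ker_toZMod, RingHom.mem_ker, map_sub, sub_eq_zero] at hmem
  rw [hmem, hx]

lemma isClosed_ker : IsClosed ((sgnHat.prod detHat).ker : Set GL2Zhat) := by
  haveI : DiscreteTopology (Matrix (Fin 2) (Fin 2) (ZMod 2)) := Pi.discreteTopology
  haveI : DiscreteTopology (GL (Fin 2) (ZMod 2)) :=
    Units.isEmbedding_embedProduct.discreteTopology
  have hredc : Continuous (red : GL (Fin 2) ℤ_[2] → GL (Fin 2) (ZMod 2)) :=
    Continuous.units_map _ (Continuous.matrix_map continuous_id continuous_toZMod2)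
  have hset : ((sgnHat.prod detHat).ker : Set GL2Zhat) =
      ((fun g : GL2Zhat => red (g p2)) ⁻¹' {u | sgnF2 u = 1}) ∩
        ⋂ p : Nat.Primes, {g : GL2Zhat | (g p).val.det = 1} := by
    ext g
    simp only [SetLike.mem_coe, MonoidHom.mem_ker, Set.mem_inter_iff, Set.mem_preimage,
      Set.mem_setOf_eq, Set.mem_iInter]
    constructor
    · intro hg
      have h1 : sgnHat g = 1 := congrArg Prod.fst hg
      have h2 : detHat g = 1 := congrArg Prod.snd hg
      refine ⟨by rw [← sgnHat_eq]; exact h1, fun p => ?_⟩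
      have h3 := congrArg Units.val (congrFun h2 p)
      rw [show (detHat g p).val = (Matrix.GeneralLinearGroup.det (g p)).val from rfl,
        Matrix.GeneralLinearGroup.val_det_apply] at h3
      simpa using h3
    · rintro ⟨hs, hd⟩
      have hsgn : sgnHat g = 1 := by rw [sgnHat_eq]; exact hs
      have hdet : detHat g = 1 := by
        funext p
        apply Units.ext
        rw [show (detHat g p).val = (Matrix.GeneralLinearGroup.det (g p)).val from rfl,
          Matrix.GeneralLinearGroup.val_det_apply]
        simpa using hd p
      show (sgnHat g, detHat g) = (1, 1)
      rw [hsgn, hdet]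
  rw [hset]
  apply IsClosed.inter
  · exact (isClosed_discrete _).preimage (hredc.comp (continuous_apply p2))
  · exact isClosed_iInter fun p =>
      isClosed_eq ((Units.continuous_val.comp (continuous_apply p)).matrix_det) continuous_const

end AblGL2
/-- The abelianization of `GL₂(ℤ̂)` is `{±1} × ℤ̂ˣ` via `(sgn, det)`: this map is
surjective, its kernel is the closed commutator subgroup, and the induced map on the
quotient by the closed commutator subgroup is an isomorphism. -/
theorem abelianization_GL2Zhat :
    Function.Surjective ⇑(sgnHat.prod detHat) ∧
    (sgnHat.prod detHat).ker = (commutator GL2Zhat).topologicalClosure ∧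
    ∃ e : (GL2Zhat ⧸ (commutator GL2Zhat).topologicalClosure) ≃* (ℤˣ × ZhatUnits),
      ∀ g : GL2Zhat, e (QuotientGroup.mk g) = (sgnHat g, detHat g) := by
  have hker : (sgnHat.prod detHat).ker = (commutator GL2Zhat).topologicalClosure := by
    apply le_antisymm
    · exact fun g hg => Subgroup.le_topologicalClosure _ (AblGL2.ker_le_commutator hg)
    · apply Subgroup.topologicalClosure_minimal
      · have hle : (⁅(⊤ : Subgroup GL2Zhat), (⊤ : Subgroup GL2Zhat)⁆ : Subgroup GL2Zhat) ≤
            (sgnHat.prod detHat).ker := by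
          rw [Subgroup.commutator_le]
          intro a _ b _
          rw [MonoidHom.mem_ker, map_commutatorElement]
          exact commutatorElement_eq_one_iff_commute.mpr (mul_comm _ _)
        exact hle
      · exact AblGL2.isClosed_ker
  refine ⟨AblGL2.surjective_prod, hker, ?_⟩
  refine ⟨(QuotientGroup.quotientMulEquivOfEq hker.symm).trans
    (QuotientGroup.quotientKerEquivOfSurjective _ AblGL2.surjective_prod), fun g => ?_⟩
  rfl
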